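/- Exact probability that a fixed vertex set is a cut: fix 0<μ<1, n ≥ 2, 2 ≤ K_n < n, and 1 ≤ r ≤ n−1. In H(n;μ,K_n), the probability that S = {v_1,…,v_r} is a cut (no edges between S and its complement) equals ( μ·(n−r−1)/(n−1) + (1−μ)·C(n−r−1,K_n)/C(n−1,K_n) )^{n−r} · ( μ·(r−1)/(n−1) + (1−μ)·C(r−1,K_n)/C(n−1,K_n) )^{r}. -/

import Mathlib

open Finset Filter Asymptotics

namespace KOut

/-- A configuration: for each node, its type (`true` = type-1, `false` = type-2)
and the set of nodes it selects. -/
abbrev Config (n : ℕ) := (Fin n → Bool) × (Fin n → Finset (Fin n))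

/-- Probability density of a configuration in the inhomogeneous random K-out graph
model `H(n; μ, K)`: each node is independently type-1 with probability `μ` (type-2 with
probability `1-μ`), and, given its type, its selection set is uniform among the subsets
of the other `n-1` nodes of size `1` (type-1) resp. `K` (type-2). -/
noncomputable def density (n : ℕ) (μ : ℝ) (K : ℕ) (ω : Config n) : ℝ :=
  ∏ i : Fin n,
    ((if ω.1 i then μ else 1 - μ) *
      (if i ∉ ω.2 i ∧ (ω.2 i).card = (if ω.1 i then 1 else K)
       then ((n - 1).choose (if ω.1 i then 1 else K) : ℝ)⁻¹ else 0))

/-- Probability of an event in `H(n; μ, K)`. -/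
noncomputable def prob (n : ℕ) (μ : ℝ) (K : ℕ) (E : Set (Config n)) : ℝ :=
  ∑ ω : Config n, Set.indicator E (density n μ K) ω

/-- The (undirected) graph associated with a configuration: an edge joins two distinct
nodes iff at least one of them selects the other. -/
def graph {n : ℕ} (ω : Config n) : SimpleGraph (Fin n) where
  Adj i j := i ≠ j ∧ (j ∈ ω.2 i ∨ i ∈ ω.2 j)
  symm := ⟨fun _ _ h => ⟨h.1.symm, h.2.symm⟩⟩
  loopless := ⟨fun _ h => h.1 rfl⟩

instance {n : ℕ} (ω : Config n) : DecidableRel (graph ω).Adj :=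
  fun i j => inferInstanceAs (Decidable (i ≠ j ∧ (j ∈ ω.2 i ∨ i ∈ ω.2 j)))

/-- The mean number of selections `⟨K_n⟩ = μ + (1-μ) K_n`. -/
noncomputable def avgK (μ : ℝ) (K : ℕ) : ℝ := μ + (1 - μ) * K

/-- Exact probability that the fixed vertex set `S = {v_1,…,v_r}`
is a cut (no edges between `S` and its complement):
`P = (μ(n-r-1)/(n-1) + (1-μ)C(n-r-1,K)/C(n-1,K))^(n-r)
   · (μ(r-1)/(n-1) + (1-μ)C(r-1,K)/C(n-1,K))^r`. -/
theorem cut_probability_exact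
    (μ : ℝ) (hμ0 : 0 < μ) (hμ1 : μ < 1)
    (n : ℕ) (hn : 2 ≤ n) (K : ℕ) (hK : 2 ≤ K) (hKn : K < n)
    (r : ℕ) (hr1 : 1 ≤ r) (hr2 : r ≤ n - 1) :
    prob n μ K
        {ω | ∀ i : Fin n, (i : ℕ) < r → ∀ j : Fin n, ¬ (j : ℕ) < r → ¬ (graph ω).Adj i j} =
      (μ * ((n : ℝ) - r - 1) / ((n : ℝ) - 1) +
          (1 - μ) * ((n - r - 1).choose K : ℝ) / ((n - 1).choose K : ℝ)) ^ (n - r) *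
        (μ * ((r : ℝ) - 1) / ((n : ℝ) - 1) +
          (1 - μ) * ((r - 1).choose K : ℝ) / ((n - 1).choose K : ℝ)) ^ r := by
  classical
  have hrn : r ≤ n := hr2.trans (Nat.sub_le n 1)
  -- the set S and its cardinalities
  set S : Finset (Fin n) := univ.filter (fun j : Fin n => (j : ℕ) < r) with hSdef
  have hScard : S.card = r := by
    have hmap : S = Finset.map (Fin.castLEEmb hrn) univ := by
      ext j
      simp only [hSdef, mem_filter, mem_univ, true_and, Finset.mem_map, Fin.castLEEmb_apply]
      constructor
      · intro hj; exact ⟨⟨(j : ℕ), hj⟩, by ext; simp⟩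
      · rintro ⟨a, rfl⟩; simpa using a.isLt
    rw [hmap, Finset.card_map, card_univ, Fintype.card_fin]
  have hSccard : Sᶜ.card = n - r := by
    rw [Finset.card_compl, Fintype.card_fin, hScard]
  -- the allowed selection set for each node
  set A : Fin n → Finset (Fin n) := fun i => if (i : ℕ) < r then S else Sᶜ with hAdef
  have hcard : ∀ i : Fin n,
      ((A i).erase i).card = if (i : ℕ) < r then r - 1 else n - r - 1 := by
    intro i
    by_cases hi : (i : ℕ) < r
    · simp only [hAdef, if_pos hi]
      rw [Finset.card_erase_of_mem (by simp [hSdef, hi]), hScard]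
    · simp only [hAdef, if_neg hi]
      rw [Finset.card_erase_of_mem (by simp [Finset.mem_compl, hSdef]; omega), hSccard]
  -- characterization of the event
  have hE : ∀ ω : Config n,
      (ω ∈ {ω : Config n |
          ∀ i : Fin n, (i : ℕ) < r → ∀ j : Fin n, ¬ (j : ℕ) < r → ¬ (graph ω).Adj i j})
        ↔ ∀ i : Fin n, ω.2 i ⊆ A i := by
    intro ω
    simp only [Set.mem_setOf_eq]
    constructor
    · intro h i
      by_cases hi : (i : ℕ) < r
      · simp only [hAdef, if_pos hi]
        intro j hj
        simp only [hSdef, mem_filter, mem_univ, true_and]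
        by_contra hjr
        exact h i hi j hjr ⟨fun hij => hjr (hij ▸ hi), Or.inl hj⟩
      · simp only [hAdef, if_neg hi]
        intro j hj
        rw [Finset.mem_compl]
        simp only [hSdef, mem_filter, mem_univ, true_and]
        intro hjr
        exact h j hjr i hi ⟨fun hij => hi (hij ▸ hjr), Or.inr hj⟩
    · intro h i hi j hj hadj
      rcases hadj.2 with hcase | hcase
      · have hjA := h i hcase
        simp only [hAdef, if_pos hi, hSdef, mem_filter, mem_univ, true_and] at hjA
        exact hj hjA
      · have hiA := h j hcase
        simp only [hAdef, if_neg hj, Finset.mem_compl, hSdef, mem_filter, mem_univ,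
          true_and] at hiA
        exact hiA hi
  -- the per-coordinate weight
  set h : Fin n → Bool → Finset (Fin n) → ℝ := fun i b X =>
    ((if b then μ else 1 - μ) *
      (if i ∉ X ∧ X.card = (if b then 1 else K)
        then ((n - 1).choose (if b then 1 else K) : ℝ)⁻¹ else 0)) *
      (if X ⊆ A i then 1 else 0) with hhdef
  -- Step 1: the probability is a sum of products
  have step1 : prob n μ K
      {ω : Config n | ∀ i : Fin n, (i : ℕ) < r → ∀ j : Fin n, ¬ (j : ℕ) < r →
        ¬ (graph ω).Adj i j} = ∑ ω : Config n, ∏ i : Fin n, h i (ω.1 i) (ω.2 i) := by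
    rw [prob]
    refine Finset.sum_congr rfl fun ω _ => ?_
    by_cases hω : ω ∈ {ω : Config n | ∀ i : Fin n, (i : ℕ) < r → ∀ j : Fin n,
        ¬ (j : ℕ) < r → ¬ (graph ω).Adj i j}
    · rw [Set.indicator_of_mem hω, density]
      refine Finset.prod_congr rfl fun i _ => ?_
      have := (hE ω).1 hω i
      simp only [hhdef]
      rw [if_pos this, mul_one]
    · rw [Set.indicator_of_notMem hω]
      obtain ⟨i, hi⟩ : ∃ i : Fin n, ¬ ω.2 i ⊆ A i := by
        by_contra hcon
        push_neg at hcon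
        exact hω ((hE ω).2 hcon)
      symm
      refine Finset.prod_eq_zero (mem_univ i) ?_
      simp only [hhdef]
      rw [if_neg hi, mul_zero]
  -- Step 2: exchange sums and products
  have step2 : ∑ ω : Config n, ∏ i : Fin n, h i (ω.1 i) (ω.2 i)
      = ∏ i : Fin n, ∑ b : Bool, ∑ X : Finset (Fin n), h i b X := by
    rw [Fintype.sum_prod_type]
    rw [Fintype.prod_sum fun i b => ∑ X : Finset (Fin n), h i b X]
    refine Finset.sum_congr rfl fun a _ => ?_
    exact (Fintype.prod_sum fun i X => h i (a i) X).symm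
  -- Step 3: evaluate the inner sum over X
  have hXsum : ∀ (i : Fin n) (b : Bool),
      ∑ X : Finset (Fin n), h i b X =
        (if b then μ else 1 - μ) * ((n - 1).choose (if b then 1 else K) : ℝ)⁻¹ *
          ((((A i).erase i).card.choose (if b then 1 else K)) : ℝ) := by
    intro i b
    have hterm : ∀ X : Finset (Fin n),
        h i b X = if X ∈ Finset.powersetCard (if b then 1 else K) ((A i).erase i)
          then (if b then μ else 1 - μ) * ((n - 1).choose (if b then 1 else K) : ℝ)⁻¹
          else 0 := by
      intro X
      simp only [hhdef]
      by_cases h2 : X ⊆ A i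
      · rw [if_pos h2, mul_one]
        by_cases h1 : i ∉ X ∧ X.card = (if b then 1 else K)
        · rw [if_pos h1, if_pos (Finset.mem_powersetCard.2
            ⟨Finset.subset_erase.2 ⟨h2, h1.1⟩, h1.2⟩)]
        · rw [if_neg h1, mul_zero,
            if_neg (fun hmem => h1 ⟨(Finset.subset_erase.1
              (Finset.mem_powersetCard.1 hmem).1).2, (Finset.mem_powersetCard.1 hmem).2⟩)]
      · rw [if_neg h2, mul_zero,
          if_neg (fun hmem => h2 (((Finset.mem_powersetCard.1 hmem).1).trans
            (Finset.erase_subset _ _)))]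
    rw [Finset.sum_congr rfl fun X _ => hterm X, Finset.sum_ite_mem, Finset.univ_inter,
      Finset.sum_const, Finset.card_powersetCard, nsmul_eq_mul]
    ring
  -- Step 4: evaluate the sum over the type
  have hcast1 : ((n - 1 : ℕ) : ℝ) = (n : ℝ) - 1 := by
    rw [Nat.cast_sub (by omega)]; norm_num
  have hbsum : ∀ i : Fin n, ∑ b : Bool, ∑ X : Finset (Fin n), h i b X =
      if (i : ℕ) < r
      then μ * ((r : ℝ) - 1) / ((n : ℝ) - 1) +
          (1 - μ) * ((r - 1).choose K : ℝ) / ((n - 1).choose K : ℝ)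
      else μ * ((n : ℝ) - r - 1) / ((n : ℝ) - 1) +
          (1 - μ) * ((n - r - 1).choose K : ℝ) / ((n - 1).choose K : ℝ) := by
    intro i
    rw [Fintype.sum_bool, hXsum i true, hXsum i false, hcard i]
    by_cases hi : (i : ℕ) < r
    · simp only [if_pos hi, if_true, Bool.false_eq_true, if_false]
      have h2 : ((r - 1 : ℕ) : ℝ) = (r : ℝ) - 1 := by
        rw [Nat.cast_sub hr1]; norm_num
      rw [Nat.choose_one_right, Nat.choose_one_right, hcast1, h2,
        div_eq_mul_inv, div_eq_mul_inv]
      ring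
    · simp only [if_neg hi, if_true, Bool.false_eq_true, if_false]
      have h2 : ((n - r - 1 : ℕ) : ℝ) = (n : ℝ) - r - 1 := by
        rw [Nat.cast_sub (by omega), Nat.cast_sub (by omega)]; norm_num
      rw [Nat.choose_one_right, Nat.choose_one_right, hcast1, h2,
        div_eq_mul_inv, div_eq_mul_inv]
      ring
  -- Put everything together
  rw [step1, step2, Finset.prod_congr rfl fun i _ => hbsum i, Finset.prod_ite,
    Finset.prod_const, Finset.prod_const]
  have hfilt : (univ.filter fun i : Fin n => (i : ℕ) < r) = S := hSdef.symm
  have hfilt' : (univ.filter fun i : Fin n => ¬ (i : ℕ) < r) = Sᶜ := by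
    rw [hSdef]
    exact (Finset.compl_filter _).symm
  rw [hfilt, hfilt', hScard, hSccard, mul_comm]

end KOut
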